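/- With g and G the quadratic and cubic forms on S⁴V built from the symplectic ε as above, the normalization identity 6·G^e_{a(b}·G_{cd)e} = g_{a(b}·g_{cd)} holds, where indices are raised with g and round brackets denote symmetrization over the enclosed indices. -/

import Mathlib

noncomputable section

open Matrix

/-- The spinor symplectic form `ε` on the 2-dimensional space `V = ℂ²`. -/
def eps : Matrix (Fin 2) (Fin 2) ℂ := !![0, 1; -1, 0]

/-- An index of `S⁴V` is a (symmetrized) block of four spinor indices. -/
abbrev Idx := Fin 4 → Fin 2

/-- The induced metric `g_{ae} = S_{(ABCD)}(ε_{AE}ε_{BF}ε_{CG}ε_{DH})` on `S⁴V`. -/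
def gS (a e : Idx) : ℂ :=
  (1 / 24) * ∑ σ : Equiv.Perm (Fin 4), ∏ i : Fin 4, eps (a (σ i)) (e i)

/-- The cubic form `G_{aep} = S_{(ABCD)}S_{(EFGH)}(ε_{AE}ε_{BF}ε_{GP}ε_{HQ}ε_{CR}ε_{DS})`
as a tensor on `S⁴V`. -/
def GS (a e p : Idx) : ℂ :=
  (1 / 24) ^ 3 * ∑ σ : Equiv.Perm (Fin 4), ∑ τ : Equiv.Perm (Fin 4),
    ∑ ω : Equiv.Perm (Fin 4),
    eps (a (σ 0)) (e (τ 0)) * eps (a (σ 1)) (e (τ 1)) *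
    eps (e (τ 2)) (p (ω 0)) * eps (e (τ 3)) (p (ω 1)) *
    eps (a (σ 2)) (p (ω 2)) * eps (a (σ 3)) (p (ω 3))

/-- A basis of the 5-dimensional space `S⁴V` indexed by `Fin 5`. -/
def tup (m : Fin 5) : Idx := fun i => if (i : ℕ) < (m : ℕ) then 1 else 0

/-- Components of `g` in the `Fin 5` basis of `S⁴V`. -/
def g5 : Matrix (Fin 5) (Fin 5) ℂ := fun m n => gS (tup m) (tup n)

/-- Components of `G` in the `Fin 5` basis of `S⁴V`. -/
def G5 (m n p : Fin 5) : ℂ := GS (tup m) (tup n) (tup p)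

/-- Symmetrization of a trilinear expression over its three displayed indices. -/
def sym3 (T : Fin 5 → Fin 5 → Fin 5 → ℂ) (b c d : Fin 5) : ℂ :=
  (T b c d + T b d c + T c b d + T c d b + T d b c + T d c b) / 6


/-! ### Auxiliary integer model -/

def epsZ : Fin 2 → Fin 2 → ℤ := fun i j => !![(0:ℤ), 1; -1, 0] i j

def cI (p : Fin 5) : ℤ :=
  match p with
  | 0 => 24 | 1 => -6 | 2 => 4 | 3 => -6 | 4 => 24

/-- Table for the inner `ω`-sum. -/
def Wt (p : Fin 5) (u v w x : Fin 2) : ℤ :=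
  if (u:ℕ) + (v:ℕ) + (w:ℕ) + (x:ℕ) + (p:ℕ) = 4 then cI p else 0

lemma W_eq : ∀ (p : Fin 5) (u v w x : Fin 2),
    (∑ ω : Equiv.Perm (Fin 4),
      epsZ u (tup p (ω 0)) * epsZ v (tup p (ω 1)) *
      epsZ w (tup p (ω 2)) * epsZ x (tup p (ω 3))) = Wt p u v w x := by decide

def SZ (m n : Fin 5) : ℤ :=
  ∑ σ : Equiv.Perm (Fin 4), ∏ i : Fin 4, epsZ (tup m (σ i)) (tup n i)

def St (m n : Fin 5) : ℤ := if (m:ℕ) + (n:ℕ) = 4 then cI m else 0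

lemma SZ_eq : ∀ m n, SZ m n = St m n := by decide

def TZ (m n p : Fin 5) : ℤ :=
  ∑ σ : Equiv.Perm (Fin 4), ∑ τ : Equiv.Perm (Fin 4), ∑ ω : Equiv.Perm (Fin 4),
    epsZ (tup m (σ 0)) (tup n (τ 0)) * epsZ (tup m (σ 1)) (tup n (τ 1)) *
    epsZ (tup n (τ 2)) (tup p (ω 0)) * epsZ (tup n (τ 3)) (tup p (ω 1)) *
    epsZ (tup m (σ 2)) (tup p (ω 2)) * epsZ (tup m (σ 3)) (tup p (ω 3))

def TZ2 (m n p : Fin 5) : ℤ :=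
  ∑ σ : Equiv.Perm (Fin 4), ∑ τ : Equiv.Perm (Fin 4),
    epsZ (tup m (σ 0)) (tup n (τ 0)) * epsZ (tup m (σ 1)) (tup n (τ 1)) *
    Wt p (tup n (τ 2)) (tup n (τ 3)) (tup m (σ 2)) (tup m (σ 3))

lemma TZ_eq_TZ2 (m n p : Fin 5) : TZ m n p = TZ2 m n p := by
  simp only [TZ, TZ2]
  refine Finset.sum_congr rfl fun σ _ => Finset.sum_congr rfl fun τ _ => ?_
  rw [← W_eq p (tup n (τ 2)) (tup n (τ 3)) (tup m (σ 2)) (tup m (σ 3)), Finset.mul_sum]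
  exact Finset.sum_congr rfl fun ω _ => by ring

def Gt (m n p : Fin 5) : ℤ :=
  if (m:ℕ) + (n:ℕ) + (p:ℕ) = 6 then
    if (m:ℕ) * (n:ℕ) * (p:ℕ) = 0 then
      if (m:ℕ)^2 + (n:ℕ)^2 + (p:ℕ)^2 = 20 then 2304 else -1728
    else if (m:ℕ) * (n:ℕ) * (p:ℕ) = 4 then -1728
    else if (m:ℕ) * (n:ℕ) * (p:ℕ) = 6 then 288
    else -384
  else 0

set_option maxHeartbeats 8000000 in
lemma TZ2_eq : ∀ m n p, TZ2 m n p = Gt m n p := by decide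

lemma TZ_eq (m n p : Fin 5) : TZ m n p = Gt m n p :=
  (TZ_eq_TZ2 m n p).trans (TZ2_eq m n p)

/-! ### Cast lemmas -/

lemma epsC (i j : Fin 2) : eps i j = ((epsZ i j : ℤ) : ℂ) := by
  fin_cases i <;> fin_cases j <;> simp [eps, epsZ]

lemma hg (m n : Fin 5) : g5 m n = ((St m n : ℤ) : ℂ) / 24 := by
  have : g5 m n = (1 / 24) * ((SZ m n : ℤ) : ℂ) := by
    simp only [g5, gS, SZ, epsC]
    push_cast
    rfl
  rw [this, SZ_eq]; ring

lemma hG (m n p : Fin 5) : G5 m n p = ((Gt m n p : ℤ) : ℂ) / 13824 := by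
  have : G5 m n p = (1 / 24) ^ 3 * ((TZ m n p : ℤ) : ℂ) := by
    simp only [G5, GS, TZ, epsC]
    push_cast
    rfl
  rw [this, TZ_eq]; ring

/-! ### The inverse metric -/

def giZ (e f : Fin 5) : ℤ :=
  if (e:ℕ) + (f:ℕ) = 4 then (match e with | 0 => 1 | 1 => -4 | 2 => 6 | 3 => -4 | 4 => 1) else 0

lemma hSgi : ∀ i j : Fin 5, (∑ k : Fin 5, St i k * giZ k j) = if i = j then 24 else 0 := by
  decide

lemma g5_inv_eq : g5⁻¹ = fun e f => ((giZ e f : ℤ) : ℂ) := by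
  refine Matrix.inv_eq_right_inv ?_
  ext i j
  change (∑ k, g5 i k * ((giZ k j : ℤ) : ℂ)) = _
  have h : ∀ k, g5 i k * ((giZ k j : ℤ) : ℂ) = ((St i k * giZ k j : ℤ) : ℂ) / 24 := fun k => by
    rw [hg]; push_cast; ring
  simp only [h]
  rw [← Finset.sum_div, ← Int.cast_sum, hSgi i j]
  rw [Matrix.one_apply]
  split_ifs <;> norm_num

lemma hgi (e f : Fin 5) : (g5⁻¹) e f = ((giZ e f : ℤ) : ℂ) := by rw [g5_inv_eq]

/-! ### The core integer identity -/

def SS (u v w x : Fin 5) : ℤ :=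
  ∑ e : Fin 5, ∑ f : Fin 5, giZ e f * Gt f u v * Gt w x e

set_option maxHeartbeats 8000000 in
lemma keyZ : ∀ a b c d : Fin 5,
    SS a b c d + SS a b d c + SS a c b d + SS a c d b + SS a d b c + SS a d c b
    = 55296 * (St a b * St c d + St a b * St d c + St a c * St b d
        + St a c * St d b + St a d * St b c + St a d * St c b) := by decide

lemma pull (u v w x : Fin 5) :
    (∑ e : Fin 5, ∑ f : Fin 5,
      ((giZ e f : ℤ) : ℂ) * (((Gt f u v : ℤ) : ℂ) / 13824) * (((Gt w x e : ℤ) : ℂ) / 13824))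
    = ((SS u v w x : ℤ) : ℂ) / 191102976 := by
  rw [SS]
  push_cast
  rw [Finset.sum_div]
  refine Finset.sum_congr rfl fun e _ => ?_
  rw [Finset.sum_div]
  refine Finset.sum_congr rfl fun f _ => ?_
  ring

/-- The normalization identity `6·G^e_{a(b}·G_{cd)e} = g_{a(b}·g_{cd)}`
(indices raised with `g`, round brackets denoting symmetrization over `b,c,d`). -/
theorem normalization_identity :
    ∀ a b c d : Fin 5,
      6 * sym3 (fun b c d => ∑ e : Fin 5, ∑ f : Fin 5,
        (g5⁻¹) e f * G5 f a b * G5 c d e) b c d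
      = sym3 (fun b c d => g5 a b * g5 c d) b c d := by
  intro a b c d
  simp only [sym3, hgi, hG, hg]
  rw [pull, pull, pull, pull, pull, pull]
  have h := congrArg (fun z : ℤ => (z : ℂ)) (keyZ a b c d)
  push_cast at h
  linear_combination (191102976 : ℂ)⁻¹ * h
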